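/- (Pointwise form of the claim that the model of Cabannes et al. is label-aligned.) Let Q ∈ Δ(Y) with argmax Q = {i} a singleton, and let M : Y → Δ(S). Denote by P(s) = Σ_{y} Q(y)·M(y)(s) the induced bag distribution. Suppose the intersection of all bags with positive probability equals {i}, i.e., ⋂ {s ∈ S : P(s) > 0} = {i}. Then the bag frequencies F(y) = Σ_{s ∈ S, y ∈ s} P(s) satisfy F(i) = 1 and F(j) < 1 for all j ≠ i; hence argmax F = {i} = argmax Q. -/
import Mathlib


/-- A probability vector on a finite type `T`. -/
def IsProbVec {T : Type*} [Fintype T] (Q : T → ℝ) : Prop :=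
  (∀ t, 0 ≤ Q t) ∧ ∑ t, Q t = 1

/-- The argmax set of a real-valued function on labels. -/
def argmaxSet {Y : Type*} (Q : Y → ℝ) : Set Y := {y | ∀ y', Q y' ≤ Q y}

/-- The bag frequency of label `y` under kernel `M` and label distribution `Q`. -/
def bagFreq {Y : Type*} [Fintype Y] [DecidableEq Y]
    (M : Y → Finset Y → ℝ) (Q : Y → ℝ) (y : Y) : ℝ :=
  ∑ s ∈ Finset.univ.filter (fun s : Finset Y => y ∈ s), ∑ y', Q y' * M y' s

/-- Pointwise form of the claim that the model of Cabannes et al. is label-aligned: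
if `argmax Q = {i}` and the intersection of all bags with positive induced
probability equals `{i}`, then `F i = 1`, `F j < 1` for `j ≠ i`, and
`argmax F = {i} = argmax Q`. -/
theorem cabannes_labelAligned_pointwise
    {Y : Type*} [Fintype Y] [DecidableEq Y] (hY : 2 ≤ Fintype.card Y)
    (i : Y) (Q : Y → ℝ) (hQ : IsProbVec Q) (hargmax : argmaxSet Q = {i})
    (M : Y → Finset Y → ℝ) (hM : ∀ y, IsProbVec (M y))
    (hinter : {y : Y | ∀ s : Finset Y, 0 < ∑ y', Q y' * M y' s → y ∈ s} = {i}) :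
    bagFreq M Q i = 1 ∧
    (∀ j : Y, j ≠ i → bagFreq M Q j < 1) ∧
    argmaxSet (bagFreq M Q) = {i} := by
  set P : Finset Y → ℝ := fun s => ∑ y', Q y' * M y' s with hP
  have hP0 : ∀ s, 0 ≤ P s := fun s =>
    Finset.sum_nonneg fun y' _ => mul_nonneg (hQ.1 y') ((hM y').1 s)
  have hPsum : ∑ s, P s = 1 := by
    rw [Finset.sum_comm]
    have : ∀ y' ∈ (Finset.univ : Finset Y), ∑ s, Q y' * M y' s = Q y' := by
      intro y' _
      rw [← Finset.mul_sum, (hM y').2, mul_one]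
    rw [Finset.sum_congr rfl this, hQ.2]
  -- i belongs to every positive bag
  have hi : ∀ s : Finset Y, 0 < P s → i ∈ s := by
    have : i ∈ {y : Y | ∀ s : Finset Y, 0 < ∑ y', Q y' * M y' s → y ∈ s} := by
      rw [hinter]; rfl
    exact this
  have hFi : bagFreq M Q i = 1 := by
    rw [bagFreq, ← hPsum]
    refine Finset.sum_subset (Finset.filter_subset _ _) ?_
    intro s _ hs
    simp only [Finset.mem_filter, Finset.mem_univ, true_and] at hs
    rcases (hP0 s).lt_or_eq with h | h
    · exact absurd (hi s h) hs
    · exact h.symm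
  have hFle : ∀ y, bagFreq M Q y ≤ 1 := by
    intro y
    rw [bagFreq, ← hPsum]
    exact Finset.sum_le_sum_of_subset_of_nonneg (Finset.filter_subset _ _)
      (fun s _ _ => hP0 s)
  have hFlt : ∀ j : Y, j ≠ i → bagFreq M Q j < 1 := by
    intro j hj
    have hjnot : j ∉ ({i} : Set Y) := by simpa using hj
    rw [← hinter] at hjnot
    simp only [Set.mem_setOf_eq, not_forall] at hjnot
    obtain ⟨s₀, hs₀pos, hjs₀⟩ := hjnot
    have hs₀pos : 0 < P s₀ := hs₀pos
    have : bagFreq M Q j + P s₀ ≤ 1 := by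
      rw [← hPsum, bagFreq]
      have hsub : insert s₀ (Finset.univ.filter (fun s : Finset Y => j ∈ s)) ⊆
          Finset.univ := Finset.subset_univ _
      have hnot : s₀ ∉ Finset.univ.filter (fun s : Finset Y => j ∈ s) := by
        simp [hjs₀]
      calc (∑ s ∈ Finset.univ.filter (fun s : Finset Y => j ∈ s), P s) + P s₀
          = ∑ s ∈ insert s₀ (Finset.univ.filter (fun s : Finset Y => j ∈ s)), P s := by
            rw [Finset.sum_insert hnot]; ring
        _ ≤ ∑ s, P s :=
            Finset.sum_le_sum_of_subset_of_nonneg hsub (fun s _ _ => hP0 s)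
    linarith
  refine ⟨hFi, hFlt, ?_⟩
  ext y
  simp only [argmaxSet, Set.mem_setOf_eq, Set.mem_singleton_iff]
  constructor
  · intro h
    by_contra hne
    have := h i
    rw [hFi] at this
    exact absurd this (not_le.mpr (hFlt y hne))
  · rintro rfl
    intro y'
    rw [hFi]
    exact hFle y'
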